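/- Let A, B be positive semidefinite n×n complex matrices. Then A is isosceles orthogonal to B with respect to the trace norm, i.e. ‖A + B‖₁ = ‖A − B‖₁, if and only if A·B = 0 and B·A = 0. -/

import Mathlib

open Matrix ComplexOrder

namespace Matrix.PosSemidef

/-- The positive semidefinite square root of a positive semidefinite matrix
(the definition of Mathlib of December 2024, since removed). -/
noncomputable def sqrt {n : Type*} [Fintype n] [DecidableEq n] {𝕜 : Type*} [RCLike 𝕜]
    {A : Matrix n n 𝕜} (hA : PosSemidef A) : Matrix n n 𝕜 :=
  hA.1.eigenvectorUnitary.1 * diagonal ((↑) ∘ (√·) ∘ hA.1.eigenvalues) *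
  (star hA.1.eigenvectorUnitary : Matrix n n 𝕜)

lemma posSemidef_sqrt {n : Type*} [Fintype n] [DecidableEq n] {𝕜 : Type*} [RCLike 𝕜]
    {A : Matrix n n 𝕜} (hA : PosSemidef A) : PosSemidef hA.sqrt := by
  have h := (PosSemidef.diagonal (R := 𝕜) (d := ((↑) ∘ (√·) ∘ hA.1.eigenvalues))
    (fun i => by simp [Real.sqrt_nonneg])).mul_mul_conjTranspose_same
    (hA.1.eigenvectorUnitary : Matrix n n 𝕜)
  simpa [sqrt, Matrix.star_eq_conjTranspose] using h

open scoped MatrixOrder in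
lemma sqrt_eq_cfc' {n : Type*} [Fintype n] [DecidableEq n] {𝕜 : Type*} [RCLike 𝕜]
    {A : Matrix n n 𝕜} (hA : PosSemidef A) : hA.sqrt = CFC.sqrt A := by
  rw [CFC.sqrt_eq_cfc, cfc_nnreal_eq_real _ A hA.nonneg, hA.1.cfc_eq]
  simp only [sqrt, IsHermitian.cfc, Unitary.conjStarAlgAut_apply]
  congr 3
  funext i
  simp [Real.coe_sqrt, Real.coe_toNNReal', max_eq_left (hA.eigenvalues_nonneg i)]

open scoped MatrixOrder in
lemma sqrt_mul_self {n : Type*} [Fintype n] [DecidableEq n] {𝕜 : Type*} [RCLike 𝕜]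
    {A : Matrix n n 𝕜} (hA : PosSemidef A) : hA.sqrt * hA.sqrt = A := by
  rw [sqrt_eq_cfc']; exact CFC.sqrt_mul_sqrt_self A hA.nonneg

open scoped MatrixOrder in
lemma sqrt_sq {n : Type*} [Fintype n] [DecidableEq n] {𝕜 : Type*} [RCLike 𝕜]
    {A : Matrix n n 𝕜} (hA : PosSemidef A) : (hA.pow 2).sqrt = A := by
  rw [sqrt_eq_cfc']; exact CFC.sqrt_sq A hA.nonneg

lemma eq_sqrt_of_sq_eq {n : Type*} [Fintype n] [DecidableEq n] {𝕜 : Type*} [RCLike 𝕜]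
    {A : Matrix n n 𝕜} (hA : PosSemidef A) (B : Matrix n n 𝕜) (hB : A ^ 2 = B) :
    A = (show PosSemidef B from hB ▸ hA.pow 2).sqrt := by
  subst hB; exact (sqrt_sq hA).symm

end Matrix.PosSemidef

/-- The absolute value `|A| = (AᴴA)^(1/2)` of a complex matrix `A`. -/
noncomputable def matAbs {n : ℕ} (A : Matrix (Fin n) (Fin n) ℂ) : Matrix (Fin n) (Fin n) ℂ :=
  (Matrix.posSemidef_conjTranspose_mul_self A).sqrt

/-- The Schatten `p`-norm `‖A‖ₚ = (tr |A|^p)^(1/p)`, computed via the eigenvalues of `|A|`. -/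
noncomputable def schattenNorm {n : ℕ} (p : ℝ) (A : Matrix (Fin n) (Fin n) ℂ) : ℝ :=
  (∑ i, ((Matrix.posSemidef_conjTranspose_mul_self A).posSemidef_sqrt.1.eigenvalues i) ^ p) ^ (1 / p)

namespace IsoAux

variable {n : ℕ}

lemma sqrt_congr {X Y : Matrix (Fin n) (Fin n) ℂ} (hX : X.PosSemidef) (hY : Y.PosSemidef)
    (h : X = Y) : hX.sqrt = hY.sqrt := by subst h; rfl

lemma eig_congr {X Y : Matrix (Fin n) (Fin n) ℂ} (hX : X.IsHermitian) (hY : Y.IsHermitian)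
    (h : X = Y) : hX.eigenvalues = hY.eigenvalues := by subst h; rfl

lemma re_trace_ctm (M : Matrix (Fin n) (Fin n) ℂ) :
    (Matrix.trace (Mᴴ * M)).re = ∑ j, ∑ i, Complex.normSq (M i j) := by
  simp only [Matrix.trace, Matrix.diag, Matrix.mul_apply, Matrix.conjTranspose_apply,
    Complex.re_sum]
  refine Finset.sum_congr rfl fun j _ => Finset.sum_congr rfl fun i _ => ?_
  rw [mul_comm, Complex.star_def, Complex.mul_conj]
  simp

lemma re_trace_ctm_nonneg (M : Matrix (Fin n) (Fin n) ℂ) :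
    0 ≤ (Matrix.trace (Mᴴ * M)).re := by
  rw [re_trace_ctm]
  exact Finset.sum_nonneg fun j _ => Finset.sum_nonneg fun i _ => Complex.normSq_nonneg _

lemma eq_zero_of_re_trace_ctm (M : Matrix (Fin n) (Fin n) ℂ)
    (h : (Matrix.trace (Mᴴ * M)).re = 0) : M = 0 := by
  rw [re_trace_ctm] at h
  ext i j
  have := (Finset.sum_eq_zero_iff_of_nonneg (fun j _ => Finset.sum_nonneg
    (fun i _ => Complex.normSq_nonneg _))).mp h j (Finset.mem_univ j)
  have := (Finset.sum_eq_zero_iff_of_nonneg (fun i _ => Complex.normSq_nonneg _)).mp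
    this i (Finset.mem_univ i)
  simpa using Complex.normSq_eq_zero.mp this

lemma trace_mul_eq {X Y : Matrix (Fin n) (Fin n) ℂ} (hX : X.PosSemidef) (hY : Y.PosSemidef) :
    Matrix.trace (X * Y) =
      Matrix.trace ((hY.sqrt * hX.sqrt)ᴴ * (hY.sqrt * hX.sqrt)) := by
  have hV : hX.sqrtᴴ = hX.sqrt := hX.posSemidef_sqrt.1
  have hW : hY.sqrtᴴ = hY.sqrt := hY.posSemidef_sqrt.1
  calc Matrix.trace (X * Y) = Matrix.trace ((hX.sqrt * hX.sqrt) * (hY.sqrt * hY.sqrt)) := by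
        rw [hX.sqrt_mul_self, hY.sqrt_mul_self]
    _ = Matrix.trace (hX.sqrt * (hX.sqrt * (hY.sqrt * hY.sqrt))) := by rw [Matrix.mul_assoc]
    _ = Matrix.trace ((hX.sqrt * (hY.sqrt * hY.sqrt)) * hX.sqrt) := by
        rw [Matrix.trace_mul_comm]
    _ = Matrix.trace ((hY.sqrt * hX.sqrt)ᴴ * (hY.sqrt * hX.sqrt)) := by
        rw [Matrix.conjTranspose_mul, hV, hW]; simp only [Matrix.mul_assoc]

lemma re_trace_mul_nonneg {X Y : Matrix (Fin n) (Fin n) ℂ} (hX : X.PosSemidef)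
    (hY : Y.PosSemidef) : 0 ≤ (Matrix.trace (X * Y)).re := by
  rw [trace_mul_eq hX hY]; exact re_trace_ctm_nonneg _

lemma mul_eq_zero_of_re_trace {X Y : Matrix (Fin n) (Fin n) ℂ} (hX : X.PosSemidef)
    (hY : Y.PosSemidef) (h : (Matrix.trace (X * Y)).re = 0) : X * Y = 0 := by
  rw [trace_mul_eq hX hY] at h
  have hWV : hY.sqrt * hX.sqrt = 0 := eq_zero_of_re_trace_ctm _ h
  have hYX : Y * X = 0 := by
    calc Y * X = hY.sqrt * ((hY.sqrt * hX.sqrt) * hX.sqrt) := by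
          conv_lhs => rw [← hY.sqrt_mul_self, ← hX.sqrt_mul_self]
          simp only [Matrix.mul_assoc]
      _ = 0 := by rw [hWV, Matrix.zero_mul, Matrix.mul_zero]
  calc X * Y = (Y * X)ᴴ := by rw [Matrix.conjTranspose_mul, hX.1.eq, hY.1.eq]
    _ = 0 := by rw [hYX, Matrix.conjTranspose_zero]

lemma conj_trace (u X : Matrix (Fin n) (Fin n) ℂ) (h1 : star u * u = 1) :
    Matrix.trace (u * X * star u) = Matrix.trace X := by
  rw [Matrix.trace_mul_comm, ← Matrix.mul_assoc, h1, Matrix.one_mul]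

lemma conj_mul_conj (u X Y : Matrix (Fin n) (Fin n) ℂ) (h1 : star u * u = 1) :
    (u * X * star u) * (u * Y * star u) = u * (X * Y) * star u := by
  have h' : ∀ Z : Matrix (Fin n) (Fin n) ℂ, star u * (u * Z) = Z := fun Z => by
    rw [← Matrix.mul_assoc, h1, Matrix.one_mul]
  simp only [Matrix.mul_assoc, h']

lemma conj_psd (u : Matrix (Fin n) (Fin n) ℂ) (d : Fin n → ℝ) (hd : ∀ i, 0 ≤ d i) :
    (u * Matrix.diagonal (RCLike.ofReal ∘ d) * star u).PosSemidef := by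
  have hdiag : (Matrix.diagonal (RCLike.ofReal ∘ d) : Matrix (Fin n) (Fin n) ℂ).PosSemidef :=
    Matrix.posSemidef_diagonal_iff.mpr fun i => by
      simpa using Complex.zero_le_real.mpr (hd i)
  simpa [Matrix.star_eq_conjTranspose] using hdiag.mul_mul_conjTranspose_same u

lemma herm_trace {C : Matrix (Fin n) (Fin n) ℂ} (hC : C.IsHermitian) :
    Matrix.trace C = ((∑ i, hC.eigenvalues i : ℝ) : ℂ) := by
  have h1 : star (hC.eigenvectorUnitary : Matrix (Fin n) (Fin n) ℂ) *
      (hC.eigenvectorUnitary : Matrix (Fin n) (Fin n) ℂ) = 1 :=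
    Matrix.mem_unitaryGroup_iff'.mp (hC.eigenvectorUnitary).2
  conv_lhs => rw [hC.spectral_theorem, Unitary.conjStarAlgAut_apply]
  rw [conj_trace _ _ h1, Matrix.trace_diagonal]
  push_cast
  rfl

lemma schattenNorm_one_eq (M : Matrix (Fin n) (Fin n) ℂ) :
    schattenNorm 1 M = (Matrix.trace ((Matrix.posSemidef_conjTranspose_mul_self M).sqrt)).re := by
  unfold schattenNorm
  rw [herm_trace ((Matrix.posSemidef_conjTranspose_mul_self M).posSemidef_sqrt.1)]
  simp [Real.rpow_one]

lemma sqrt_ctm_of_psd {S : Matrix (Fin n) (Fin n) ℂ} (hS : S.PosSemidef) :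
    (Matrix.posSemidef_conjTranspose_mul_self S).sqrt = S := by
  have h2 : Sᴴ * S = S ^ 2 := by rw [hS.1.eq, sq]
  rw [sqrt_congr _ (hS.pow 2) h2, hS.sqrt_sq]

lemma sqrt_ctm_herm {C : Matrix (Fin n) (Fin n) ℂ} (hC : C.IsHermitian) :
    (Matrix.posSemidef_conjTranspose_mul_self C).sqrt =
      (hC.eigenvectorUnitary : Matrix (Fin n) (Fin n) ℂ) *
        Matrix.diagonal (RCLike.ofReal ∘ fun i => |hC.eigenvalues i|) *
        star (hC.eigenvectorUnitary : Matrix (Fin n) (Fin n) ℂ) := by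
  set u := (hC.eigenvectorUnitary : Matrix (Fin n) (Fin n) ℂ) with hu
  have h1 : star u * u = 1 := Matrix.mem_unitaryGroup_iff'.mp hC.eigenvectorUnitary.2
  have habs : (u * Matrix.diagonal (RCLike.ofReal ∘ fun i => |hC.eigenvalues i|) *
      star u).PosSemidef := conj_psd u _ (fun i => abs_nonneg _)
  have hsq : (u * Matrix.diagonal (RCLike.ofReal ∘ fun i => |hC.eigenvalues i|) *
      star u) ^ 2 = Cᴴ * C := by
    rw [sq, conj_mul_conj _ _ _ h1, hC.eq]
    conv_rhs => rw [hC.spectral_theorem, Unitary.conjStarAlgAut_apply]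
    rw [conj_mul_conj _ _ _ h1, Matrix.diagonal_mul_diagonal, Matrix.diagonal_mul_diagonal]
    have hfun : (fun i => (RCLike.ofReal ∘ fun i => |hC.eigenvalues i|) i *
        (RCLike.ofReal ∘ fun i => |hC.eigenvalues i|) i) =
        fun i => ((RCLike.ofReal ∘ hC.eigenvalues) i * (RCLike.ofReal ∘ hC.eigenvalues) i : ℂ) := by
      funext i
      simp only [Function.comp_apply, ← RCLike.ofReal_mul, abs_mul_abs_self]
    rw [hfun]
  exact (habs.eq_sqrt_of_sq_eq _ hsq).symm

end IsoAux

set_option maxHeartbeats 1000000 in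
open IsoAux in
theorem isosceles_traceNorm_iff_mul_eq_zero {n : ℕ}
    (A B : Matrix (Fin n) (Fin n) ℂ) (hA : A.PosSemidef) (hB : B.PosSemidef) :
    schattenNorm 1 (A + B) = schattenNorm 1 (A - B) ↔ (A * B = 0 ∧ B * A = 0) := by
  constructor
  · intro h
    have hC : (A - B).IsHermitian := hA.1.sub hB.1
    set u := (hC.eigenvectorUnitary : Matrix (Fin n) (Fin n) ℂ) with hu
    have h1 : star u * u = 1 := Matrix.mem_unitaryGroup_iff'.mp hC.eigenvectorUnitary.2
    have h2 : u * star u = 1 := Matrix.mem_unitaryGroup_iff.mp hC.eigenvectorUnitary.2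
    set lam := hC.eigenvalues with hlam
    have hABp : (A + B).PosSemidef := hA.add hB
    have hL : schattenNorm 1 (A + B) = (Matrix.trace A).re + (Matrix.trace B).re := by
      rw [schattenNorm_one_eq, sqrt_ctm_of_psd hABp, Matrix.trace_add, Complex.add_re]
    have hR : schattenNorm 1 (A - B) = ∑ i, |lam i| := by
      rw [schattenNorm_one_eq, sqrt_ctm_herm hC, conj_trace _ _ h1, Matrix.trace_diagonal,
        Complex.re_sum]
      simp [hlam]
    have hCtr : (Matrix.trace (A - B)).re = ∑ i, lam i := by
      rw [herm_trace hC]; simp [hlam]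
    -- projection P
    set d : Fin n → ℝ := fun i => if 0 < lam i then 1 else 0 with hd
    set P := u * Matrix.diagonal (RCLike.ofReal ∘ d) * star u with hPdef
    have hP : P.PosSemidef := conj_psd u d fun i => by
      by_cases hi : 0 < lam i <;> simp [hd, hi]
    have hQmat : (1 : Matrix (Fin n) (Fin n) ℂ) - P =
        u * Matrix.diagonal (RCLike.ofReal ∘ fun i => 1 - d i) * star u := by
      have hdia : (Matrix.diagonal (RCLike.ofReal ∘ fun i => 1 - d i) :
          Matrix (Fin n) (Fin n) ℂ) = 1 - Matrix.diagonal (RCLike.ofReal ∘ d) := by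
        ext i j
        by_cases hij : i = j
        · subst hij
          simp [Matrix.sub_apply, Matrix.one_apply]
        · simp [Matrix.sub_apply, Matrix.diagonal_apply_ne _ hij, Matrix.one_apply_ne hij]
      rw [hdia, Matrix.mul_sub, Matrix.sub_mul, Matrix.mul_one, h2]
    have hQ : ((1 : Matrix (Fin n) (Fin n) ℂ) - P).PosSemidef := by
      rw [hQmat]
      exact conj_psd u _ fun i => by by_cases hi : 0 < lam i <;> simp [hd, hi]
    have hPC : P * (A - B) =
        u * Matrix.diagonal (RCLike.ofReal ∘ fun i => max (lam i) 0) * star u := by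
      conv_lhs => rw [hPdef, hC.spectral_theorem, Unitary.conjStarAlgAut_apply]
      rw [conj_mul_conj _ _ _ h1, Matrix.diagonal_mul_diagonal]
      have hfun : (fun i => (RCLike.ofReal ∘ d) i * (RCLike.ofReal ∘ lam) i) =
          ((RCLike.ofReal ∘ fun i => max (lam i) 0) : Fin n → ℂ) := by
        funext i
        simp only [Function.comp_apply, ← RCLike.ofReal_mul]
        congr 1
        by_cases hi : 0 < lam i
        · simp [hd, hi, max_eq_left hi.le]
        · simp [hd, hi, max_eq_right (not_lt.mp hi)]
      rw [hfun]
    have htrPC : (Matrix.trace (P * (A - B))).re = ∑ i, max (lam i) 0 := by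
      rw [hPC, conj_trace _ _ h1, Matrix.trace_diagonal, Complex.re_sum]
      simp
    have heq : (Matrix.trace A).re + (Matrix.trace B).re = ∑ i, |lam i| := by
      rw [← hL, ← hR]; exact h
    have hsum : ∑ i, |lam i| = 2 * (∑ i, max (lam i) 0) - ∑ i, lam i := by
      rw [Finset.mul_sum, ← Finset.sum_sub_distrib]
      refine Finset.sum_congr rfl fun i _ => ?_
      rcases le_total (lam i) 0 with hx | hx
      · rw [abs_of_nonpos hx, max_eq_right hx]; ring
      · rw [abs_of_nonneg hx, max_eq_left hx]; ring
    have hCtr' : (Matrix.trace (A - B)).re = (Matrix.trace A).re - (Matrix.trace B).re := by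
      rw [Matrix.trace_sub, Complex.sub_re]
    have hkey : (Matrix.trace (P * (A - B))).re = (Matrix.trace A).re := by
      have hc := hCtr; rw [hCtr'] at hc
      have he := heq; rw [hsum, ← hc] at he
      rw [htrPC]
      linarith
    have hPC2 : Matrix.trace (P * (A - B)) = Matrix.trace (P * A) - Matrix.trace (P * B) := by
      rw [Matrix.mul_sub, Matrix.trace_sub]
    have hQA : Matrix.trace (((1 : Matrix (Fin n) (Fin n) ℂ) - P) * A) =
        Matrix.trace A - Matrix.trace (P * A) := by
      rw [Matrix.sub_mul, Matrix.one_mul, Matrix.trace_sub]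
    have e1 : (Matrix.trace (((1 : Matrix (Fin n) (Fin n) ℂ) - P) * A)).re +
        (Matrix.trace (P * B)).re = 0 := by
      have hk := hkey
      rw [hPC2, Complex.sub_re] at hk
      rw [hQA, Complex.sub_re]
      linarith
    have n1 := re_trace_mul_nonneg hQ hA
    have n2 := re_trace_mul_nonneg hP hB
    have z1 : ((1 : Matrix (Fin n) (Fin n) ℂ) - P) * A = 0 :=
      mul_eq_zero_of_re_trace hQ hA (by linarith)
    have z2 : P * B = 0 := mul_eq_zero_of_re_trace hP hB (by linarith)
    have hA2 : A * ((1 : Matrix (Fin n) (Fin n) ℂ) - P) = 0 := by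
      have hz := congrArg Matrix.conjTranspose z1
      rwa [Matrix.conjTranspose_mul, hA.1.eq, hQ.1.eq, Matrix.conjTranspose_zero] at hz
    have hAP : A = A * P := by
      rw [Matrix.mul_sub, Matrix.mul_one] at hA2
      exact sub_eq_zero.mp hA2
    have hABz : A * B = 0 := by
      calc A * B = A * P * B := by rw [← hAP]
        _ = A * (P * B) := Matrix.mul_assoc _ _ _
        _ = 0 := by rw [z2, Matrix.mul_zero]
    refine ⟨hABz, ?_⟩
    calc B * A = (A * B)ᴴ := by rw [Matrix.conjTranspose_mul, hA.1.eq, hB.1.eq]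
      _ = 0 := by rw [hABz, Matrix.conjTranspose_zero]
  · rintro ⟨hab, hba⟩
    have key : (A + B)ᴴ * (A + B) = (A - B)ᴴ * (A - B) := by
      rw [Matrix.conjTranspose_add, Matrix.conjTranspose_sub, hA.1.eq, hB.1.eq]
      simp only [Matrix.add_mul, Matrix.mul_add, Matrix.sub_mul, Matrix.mul_sub, hab, hba]
      abel
    have hsqrt : (Matrix.posSemidef_conjTranspose_mul_self (A + B)).sqrt =
        (Matrix.posSemidef_conjTranspose_mul_self (A - B)).sqrt :=
      sqrt_congr _ _ key
    have heig := eig_congr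
      (Matrix.posSemidef_conjTranspose_mul_self (A + B)).posSemidef_sqrt.1
      (Matrix.posSemidef_conjTranspose_mul_self (A - B)).posSemidef_sqrt.1 hsqrt
    unfold schattenNorm
    rw [heig]
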